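/- arXiv:2305.09634 — 3 statements merged into one kernel-verified Lean document; each statement's English description precedes it below -/
import Mathlib

section
/- For every state s ∈ S, Val(s) = 1 if and only if s ∈ Good. -/
open scoped ENNReal NNReal Classical
open Filter

universe u v

variable {S : Type u} {A : Type v}

/-- A finite MDP: `P s a = some d` means action `a` is legal at `s` and `d` is a
probability distribution on `S`; every state has at least one legal action. -/
structure MDP (S : Type u) (A : Type v) [Fintype S] [Fintype A] where
  P : S → A → Option (S → NNReal)
  sum_one : ∀ s a d, P s a = some d → (∑ s', d s') = 1
  exists_legal : ∀ s, ∃ a, (P s a).isSome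

/-- Last state of an alternating path starting at `s` with steps `steps`. -/
def lastState : S → List (A × S) → S
  | s, [] => s
  | _, (_, s') :: rest => lastState s' rest

/-- A finite path: a start state together with a list of (action, next-state) steps. -/
structure FPath (S : Type u) (A : Type v) where
  start : S
  steps : List (A × S)

namespace FPath

def last (ρ : FPath S A) : S := lastState ρ.start ρ.steps

def states (ρ : FPath S A) : List S := ρ.start :: ρ.steps.map Prod.snd

def length (ρ : FPath S A) : ℕ := ρ.steps.length

end FPath

/-- A (raw) strategy: maps each finite path (start state + steps) to a distribution on actions. -/
def Strat (S : Type u) (A : Type v) := S → List (A × S) → A → ℝ≥0∞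

/-- Shifted strategy `σ_ρ` for `ρ = (s₀, pre)`: `σ_ρ(ρ') = σ(ρ·ρ')`. -/
def shiftStrat (σ : Strat S A) (s₀ : S) (pre : List (A × S)) : Strat S A :=
  fun _ steps a => σ s₀ (pre ++ steps) a

/-- Generic cylinder weight (product of strategy- and transition-probabilities along the
steps), relative to a transition kernel `p`. The accumulator `pre` is the path-prefix so far. -/
noncomputable def wtP (p : S → A → S → ℝ≥0∞) (σ : Strat S A) (s₀ : S) :
    List (A × S) → List (A × S) → ℝ≥0∞
  | _, [] => 1
  | pre, (a, s') :: rest =>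
      σ s₀ pre a * p (lastState s₀ pre) a s' * wtP p σ s₀ (pre ++ [(a, s')]) rest
  termination_by pre l => l.length

/-- Generic cylinder probability of path `ρ` from start state `s`, kernel `p`. -/
noncomputable def cylProbP (p : S → A → S → ℝ≥0∞) (σ : Strat S A) (s : S) (ρ : FPath S A) :
    ℝ≥0∞ :=
  if ρ.start = s then wtP p σ ρ.start [] ρ.steps else 0

namespace MDP

variable [Fintype S] [Fintype A]

def legal (M : MDP S A) (s : S) (a : A) : Prop := (M.P s a).isSome

noncomputable def prob (M : MDP S A) (s : S) (a : A) (s' : S) : ℝ≥0∞ :=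
  (M.P s a).elim 0 fun d => (d s' : ℝ≥0∞)

/-- `ρ` is a finite path of `M` from `s`: every action legal, every transition of
positive probability. -/
def IsPathFrom (M : MDP S A) : S → List (A × S) → Prop
  | _, [] => True
  | s, (a, s') :: rest => M.legal s a ∧ 0 < M.prob s a s' ∧ M.IsPathFrom s' rest

def IsPath (M : MDP S A) (ρ : FPath S A) : Prop := M.IsPathFrom ρ.start ρ.steps

/-- `σ` is a strategy: at every finite path it gives a probability distribution on actions
supported on actions legal at the last state. -/
def IsStrategy (M : MDP S A) (σ : Strat S A) : Prop :=
  ∀ s steps, M.IsPathFrom s steps →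
    (∑ a, σ s steps a) = 1 ∧ ∀ a, 0 < σ s steps a → M.legal (lastState s steps) a

/-- Cylinder probability `P_{σ,s}(ρ)` in `M`. -/
noncomputable def cylProb (M : MDP S A) (σ : Strat S A) (s : S) (ρ : FPath S A) : ℝ≥0∞ :=
  cylProbP M.prob σ s ρ

/-- `T` is a set of sink states: each `t ∈ T` has exactly one legal action, leading back
to `t` with probability `1`. -/
def SinkSet (M : MDP S A) (T : Set S) : Prop :=
  ∀ t ∈ T, (∃! a, M.legal t a) ∧ ∀ a, M.legal t a → M.prob t a t = 1

/-- Generic pruned finite-path predicate: all states have positive value `v` and every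
step uses an `opt` state-action pair with positive transition probability in `M`. -/
def IsPathFromPruned (M : MDP S A) (v : S → ℝ≥0∞) (opt : S → A → Prop) :
    S → List (A × S) → Prop
  | s, [] => 0 < v s
  | s, (a, s') :: rest =>
      0 < v s ∧ opt s a ∧ 0 < M.prob s a s' ∧ M.IsPathFromPruned v opt s' rest

/-! ### Reachability -/

/-- `ρ` is a `T`-hitting path: its last state lies in `T` and no other state does. -/
def HitsFirst (T : Set S) (ρ : FPath S A) : Prop :=
  ρ.last ∈ T ∧ ∀ x ∈ ρ.states.dropLast, x ∉ T

/-- `Pr_{σ,s}(◊T)`: sum over `T`-hitting paths starting at `s` of their cylinder probabilities. -/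
noncomputable def prReach (M : MDP S A) (σ : Strat S A) (s : S) (T : Set S) : ℝ≥0∞ :=
  ∑' ρ : {ρ : FPath S A // M.IsPath ρ ∧ HitsFirst T ρ ∧ ρ.start = s}, M.cylProb σ s ρ.1

/-- `Val(s)` for reachability: supremum over strategies of `Pr_{σ,s}(◊T)`. -/
noncomputable def reachVal (M : MDP S A) (T : Set S) (s : S) : ℝ≥0∞ :=
  ⨆ (σ : Strat S A) (_ : M.IsStrategy σ), M.prReach σ s T

/-- `(s,a) ∈ Opt` for reachability. -/
def OptR (M : MDP S A) (T : Set S) (s : S) (a : A) : Prop :=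
  M.legal s a ∧ M.reachVal T s = ∑ s', M.prob s a s' * M.reachVal T s'

/-- `σ ∈ Σ^Opt` for reachability. -/
def SigmaOptR (M : MDP S A) (T : Set S) (σ : Strat S A) : Prop :=
  ∀ s steps, M.IsPathFrom s steps → ∀ a, 0 < σ s steps a → M.OptR T (lastState s steps) a

/-- Transition probabilities of the pruned MDP `M'` for reachability. -/
noncomputable def probR' (M : MDP S A) (T : Set S) (s : S) (a : A) (s' : S) : ℝ≥0∞ :=
  if M.OptR T s a ∧ 0 < M.reachVal T s then
    M.prob s a s' * M.reachVal T s' / M.reachVal T s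
  else 0

/-- `ρ` is a finite path of the pruned MDP `M'` (reachability version). -/
def IsPathR' (M : MDP S A) (T : Set S) (ρ : FPath S A) : Prop :=
  M.IsPathFromPruned (M.reachVal T) (M.OptR T) ρ.start ρ.steps

/-- Cylinder probability `P'_{σ,s}(ρ)` in the pruned MDP `M'` (reachability version). -/
noncomputable def cylProbR' (M : MDP S A) (T : Set S) (σ : Strat S A) (s : S) (ρ : FPath S A) :
    ℝ≥0∞ :=
  cylProbP (M.probR' T) σ s ρ

/-- `Pr'_{σ,s}(◊T)` in the pruned MDP `M'`. -/
noncomputable def prReach' (M : MDP S A) (σ : Strat S A) (s : S) (T : Set S) : ℝ≥0∞ :=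
  ∑' ρ : {ρ : FPath S A // M.IsPathR' T ρ ∧ HitsFirst T ρ ∧ ρ.start = s},
    M.cylProbR' T σ s ρ.1

/-- Probability of hitting `T` for the first time in exactly `r` steps, in `M`. -/
noncomputable def hitLenProb (M : MDP S A) (σ : Strat S A) (s : S) (T : Set S) (r : ℕ) :
    ℝ≥0∞ :=
  ∑' ρ : {ρ : FPath S A // M.IsPath ρ ∧ HitsFirst T ρ ∧ ρ.start = s ∧ ρ.length = r},
    M.cylProb σ s ρ.1

/-- Probability of hitting `T` for the first time in exactly `r` steps, in `M'`. -/
noncomputable def hitLenProb' (M : MDP S A) (σ : Strat S A) (s : S) (T : Set S) (r : ℕ) :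
    ℝ≥0∞ :=
  ∑' ρ : {ρ : FPath S A // M.IsPathR' T ρ ∧ HitsFirst T ρ ∧ ρ.start = s ∧ ρ.length = r},
    M.cylProbR' T σ s ρ.1

/-- Conditional expected length to target `E_{σ,s}(len_T | ◊T)`. -/
noncomputable def condExpLen (M : MDP S A) (σ : Strat S A) (s : S) (T : Set S) : ℝ≥0∞ :=
  ∑' r : ℕ, (r : ℝ≥0∞) * M.hitLenProb σ s T r / M.prReach σ s T

/-- Expected length to target in `M'`, `E'_{σ,s}(len_T)`; `∞` unless `Pr'_{σ,s}(◊T) = 1`. -/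
noncomputable def expLen' (M : MDP S A) (σ : Strat S A) (s : S) (T : Set S) : ℝ≥0∞ :=
  if M.prReach' σ s T = 1 then ∑' r : ℕ, (r : ℝ≥0∞) * M.hitLenProb' σ s T r else ⊤

/-! ### Safety -/

/-- `Safe_n(σ,s)`: probability of the paths of length `n` from `s` avoiding `Bad`. -/
noncomputable def safeN (M : MDP S A) (σ : Strat S A) (s : S) (Bad : Set S) (n : ℕ) : ℝ≥0∞ :=
  ∑' ρ : {ρ : FPath S A //
      M.IsPath ρ ∧ ρ.start = s ∧ ρ.length = n ∧ ∀ x ∈ ρ.states, x ∉ Bad},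
    M.cylProb σ s ρ.1

/-- `Pr_{σ,s}(□¬Bad) := ⨅ n, Safe_n(σ,s)`. -/
noncomputable def prSafe (M : MDP S A) (σ : Strat S A) (s : S) (Bad : Set S) : ℝ≥0∞ :=
  ⨅ n : ℕ, M.safeN σ s Bad n

/-- `Val(s)` for safety: supremum over strategies of `Pr_{σ,s}(□¬Bad)`. -/
noncomputable def safeVal (M : MDP S A) (Bad : Set S) (s : S) : ℝ≥0∞ :=
  ⨆ (σ : Strat S A) (_ : M.IsStrategy σ), M.prSafe σ s Bad

/-- `(s,a) ∈ Opt` for safety. -/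
def OptS (M : MDP S A) (Bad : Set S) (s : S) (a : A) : Prop :=
  M.legal s a ∧ M.safeVal Bad s = ∑ s', M.prob s a s' * M.safeVal Bad s'

/-- `σ ∈ Σ^Opt` for safety. -/
def SigmaOptS (M : MDP S A) (Bad : Set S) (σ : Strat S A) : Prop :=
  ∀ s steps, M.IsPathFrom s steps → ∀ a, 0 < σ s steps a → M.OptS Bad (lastState s steps) a

/-- `UPreⁱ(Bad)`. -/
def UPre (M : MDP S A) (Bad : Set S) : ℕ → Set S
  | 0 => Bad
  | i + 1 => {s | ∀ a, M.legal s a → ∃ s' ∈ M.UPre Bad i, 0 < M.prob s a s'}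

/-- `Good := S \ UPre*(Bad)`. -/
def GoodSet (M : MDP S A) (Bad : Set S) : Set S := (⋃ i, M.UPre Bad i)ᶜ

/-- `V := S \ (Good ∪ Bad)`. -/
def VSet (M : MDP S A) (Bad : Set S) : Set S := (M.GoodSet Bad ∪ Bad)ᶜ

/-- `Pr_{σ,s}(GoodCyl(ρ)) := P_{σ,s}(ρ) · Pr_{σ_ρ, last(ρ)}(□¬Bad)`. -/
noncomputable def goodCyl (M : MDP S A) (σ : Strat S A) (s : S) (Bad : Set S) (ρ : FPath S A) :
    ℝ≥0∞ :=
  M.cylProb σ s ρ * M.prSafe (shiftStrat σ ρ.start ρ.steps) ρ.last Bad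

/-- Transition probabilities of the pruned MDP `M'` for safety. -/
noncomputable def probS' (M : MDP S A) (Bad : Set S) (s : S) (a : A) (s' : S) : ℝ≥0∞ :=
  if M.OptS Bad s a ∧ 0 < M.safeVal Bad s then
    M.prob s a s' * M.safeVal Bad s' / M.safeVal Bad s
  else 0

/-- `ρ` is a finite path of the pruned MDP `M'` (safety version). -/
def IsPathS' (M : MDP S A) (Bad : Set S) (ρ : FPath S A) : Prop :=
  M.IsPathFromPruned (M.safeVal Bad) (M.OptS Bad) ρ.start ρ.steps

/-- Cylinder probability `P'_{σ,s}(ρ)` in the pruned MDP `M'` (safety version). -/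
noncomputable def cylProbS' (M : MDP S A) (Bad : Set S) (σ : Strat S A) (s : S)
    (ρ : FPath S A) : ℝ≥0∞ :=
  cylProbP (M.probS' Bad) σ s ρ

end MDP

/-- `Reward_n(ρ) = ∑_{i<n} R(sᵢ, aᵢ)` for `ρ` starting at `s` with steps `steps`. -/
def rewardOf (R : S → A → ℝ) : S → List (A × S) → ℝ
  | _, [] => 0
  | s, (a, s') :: rest => R s a + rewardOf R s' rest

namespace MDP

variable [Fintype S] [Fintype A]

/-- `E'_{σ,s}(Reward_n)` in the pruned MDP `M'` (safety version). -/
noncomputable def expRewN' (M : MDP S A) (Bad : Set S) (R : S → A → ℝ) (σ : Strat S A)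
    (s : S) (n : ℕ) : ℝ :=
  ∑' ρ : {ρ : FPath S A // M.IsPathS' Bad ρ ∧ ρ.start = s ∧ ρ.length = n},
    (M.cylProbS' Bad σ s ρ.1).toReal * rewardOf R ρ.1.start ρ.1.steps

/-- `E'_{σ,s}(MP) := liminf_n (1/n)·E'_{σ,s}(Reward_n)`. -/
noncomputable def mp' (M : MDP S A) (Bad : Set S) (R : S → A → ℝ) (σ : Strat S A) (s : S) :
    ℝ :=
  Filter.atTop.liminf fun n : ℕ => M.expRewN' Bad R σ s n / n

/-- `E_{σ,s}(Reward_n | □¬Bad)`. -/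
noncomputable def condExpRewN (M : MDP S A) (Bad : Set S) (R : S → A → ℝ) (σ : Strat S A)
    (s : S) (n : ℕ) : ℝ :=
  (∑' ρ : {ρ : FPath S A // M.IsPath ρ ∧ ρ.start = s ∧ ρ.length = n},
    (M.goodCyl σ s Bad ρ.1).toReal * rewardOf R ρ.1.start ρ.1.steps) /
  (M.prSafe σ s Bad).toReal

/-- `E_{σ,s}(MP | □¬Bad) := liminf_n (1/n)·E_{σ,s}(Reward_n | □¬Bad)`. -/
noncomputable def condMP (M : MDP S A) (Bad : Set S) (R : S → A → ℝ) (σ : Strat S A)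
    (s : S) : ℝ :=
  Filter.atTop.liminf fun n : ℕ => M.condExpRewN Bad R σ s n / n

end MDP


/-! ### Auxiliary development for STATEMENT 10 -/

section Stmt10Aux

variable [Fintype S] [Fintype A]

lemma prob_le_one (M : MDP S A) (s : S) (a : A) (s' : S) : M.prob s a s' ≤ 1 := by
  unfold MDP.prob
  cases h : M.P s a with
  | none => simp
  | some d =>
    simp only [Option.elim]
    have hsum := M.sum_one s a d h
    have hd : d s' ≤ 1 := by
      calc d s' ≤ ∑ t, d t := Finset.single_le_sum (fun t _ => zero_le) (Finset.mem_univ s')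
        _ = 1 := hsum
    exact_mod_cast hd

lemma prob_pos_legal {M : MDP S A} {s : S} {a : A} {s' : S} (h : 0 < M.prob s a s') :
    M.legal s a := by
  unfold MDP.prob at h
  unfold MDP.legal
  cases hP : M.P s a with
  | none => rw [hP] at h; simp at h
  | some d => rfl

lemma sum_prob {M : MDP S A} {s : S} {a : A} (h : M.legal s a) :
    (∑ s', M.prob s a s') = 1 := by
  unfold MDP.legal at h
  obtain ⟨d, hd⟩ := Option.isSome_iff_exists.mp h
  unfold MDP.prob
  rw [hd]
  simp only [Option.elim]
  rw [← ENNReal.coe_finset_sum, M.sum_one s a d hd, ENNReal.coe_one]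

/-- Locally a strategy: conditions only on paths from `s`. -/
def LocalStrat (M : MDP S A) (σ : Strat S A) (s : S) : Prop :=
  ∀ steps, M.IsPathFrom s steps →
    (∑ a, σ s steps a) = 1 ∧ ∀ a, 0 < σ s steps a → M.legal (lastState s steps) a

lemma isStrategy_localStrat {M : MDP S A} {σ : Strat S A} (h : M.IsStrategy σ) (s : S) :
    LocalStrat M σ s := fun steps hsteps => h s steps hsteps

lemma localStrat_shift {M : MDP S A} {σ : Strat S A} {s : S} {a : A} {s' : S}
    (h : LocalStrat M σ s) (ha : M.legal s a) (hp : 0 < M.prob s a s') :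
    LocalStrat M (shiftStrat σ s [(a, s')]) s' := by
  intro steps hsteps
  exact h ((a, s') :: steps) ⟨ha, hp, hsteps⟩

/-- The recursive form of `safeN`. -/
noncomputable def safeAux (M : MDP S A) (Bad : Set S) : ℕ → Strat S A → S → ℝ≥0∞
  | 0, _, s => if s ∈ Bad then 0 else 1
  | n+1, σ, s => if s ∈ Bad then 0 else
      ∑ a, ∑ s', σ s [] a * M.prob s a s' * safeAux M Bad n (shiftStrat σ s [(a, s')]) s'

lemma safeAux_congr (M : MDP S A) (Bad : Set S) :
    ∀ (n : ℕ) (σ₁ σ₂ : Strat S A) (s : S), (∀ pre b, σ₁ s pre b = σ₂ s pre b) →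
      safeAux M Bad n σ₁ s = safeAux M Bad n σ₂ s := by
  intro n
  induction n with
  | zero => intros; rfl
  | succ n ih =>
    intro σ₁ σ₂ s h
    simp only [safeAux]
    by_cases hs : s ∈ Bad
    · simp [hs]
    · rw [if_neg hs, if_neg hs]
      refine Finset.sum_congr rfl fun a _ => Finset.sum_congr rfl fun s' _ => ?_
      rw [h [] a]
      congr 1
      exact ih _ _ s' (fun pre b => h ((a, s') :: pre) b)

lemma wtP_shift (p : S → A → S → ℝ≥0∞) (σ : Strat S A) (s : S) (a : A) (s' : S) :
    ∀ (rest pre : List (A × S)),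
      wtP p σ s ((a, s') :: pre) rest = wtP p (shiftStrat σ s [(a, s')]) s' pre rest := by
  intro rest
  induction rest with
  | nil => intro pre; simp [wtP]
  | cons x r ih =>
    intro pre
    obtain ⟨b, t⟩ := x
    simp only [wtP, List.cons_append]
    rw [ih (pre ++ [(b, t)])]
    rfl

lemma safeN_eq_safeAux (M : MDP S A) (Bad : Set S) :
    ∀ (n : ℕ) (σ : Strat S A) (s : S), M.safeN σ s Bad n = safeAux M Bad n σ s := by
  intro n
  induction n with
  | zero =>
    intro σ s
    unfold MDP.safeN
    by_cases hs : s ∈ Bad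
    · have : IsEmpty {ρ : FPath S A //
          M.IsPath ρ ∧ ρ.start = s ∧ ρ.length = 0 ∧ ∀ x ∈ ρ.states, x ∉ Bad} := by
        constructor
        rintro ⟨ρ, h1, h2, h3, h4⟩
        exact h4 s (by rw [← h2]; exact List.mem_cons_self) hs
      rw [tsum_empty]
      simp [safeAux, hs]
    · rw [safeAux, if_neg hs]
      have hmem : M.IsPath (⟨s, []⟩ : FPath S A) ∧ (⟨s, []⟩ : FPath S A).start = s ∧
          (⟨s, []⟩ : FPath S A).length = 0 ∧ ∀ x ∈ (⟨s, []⟩ : FPath S A).states, x ∉ Bad := by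
        refine ⟨trivial, rfl, rfl, ?_⟩
        intro x hx
        simp [FPath.states] at hx
        subst hx; exact hs
      rw [tsum_eq_single (⟨⟨s, []⟩, hmem⟩ :
          {ρ : FPath S A // M.IsPath ρ ∧ ρ.start = s ∧ ρ.length = 0 ∧
            ∀ x ∈ ρ.states, x ∉ Bad})]
      · simp [MDP.cylProb, cylProbP, wtP]
      · rintro ⟨⟨st, steps⟩, h1, h2, h3, h4⟩ hne
        exfalso
        apply hne
        have hsteps : steps = [] := List.length_eq_zero_iff.mp h3
        have hst : st = s := h2
        subst hsteps; subst hst; rfl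
  | succ n ih =>
    intro σ s
    by_cases hs : s ∈ Bad
    · unfold MDP.safeN
      have : IsEmpty {ρ : FPath S A //
          M.IsPath ρ ∧ ρ.start = s ∧ ρ.length = n + 1 ∧ ∀ x ∈ ρ.states, x ∉ Bad} := by
        constructor
        rintro ⟨ρ, h1, h2, h3, h4⟩
        exact h4 s (by rw [← h2]; exact List.mem_cons_self) hs
      rw [tsum_empty]
      simp [safeAux, hs]
    · let F : (Σ p : {p : A × S // 0 < M.prob s p.1 p.2},
            {ρ : FPath S A // M.IsPath ρ ∧ ρ.start = p.1.2 ∧ ρ.length = n ∧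
              ∀ x ∈ ρ.states, x ∉ Bad}) →
          {ρ : FPath S A // M.IsPath ρ ∧ ρ.start = s ∧ ρ.length = n + 1 ∧
            ∀ x ∈ ρ.states, x ∉ Bad} := fun x =>
        ⟨⟨s, x.1.1 :: x.2.1.steps⟩, by
          obtain ⟨⟨⟨a, s'⟩, hp⟩, ⟨⟨st, steps⟩, h1, h2, h3, h4⟩⟩ := x
          have hst : st = s' := h2
          subst hst
          refine ⟨⟨prob_pos_legal hp, hp, h1⟩, rfl, ?_, ?_⟩
          · simpa [FPath.length] using h3
          · intro x hx
            simp only [FPath.states, List.map_cons, List.mem_cons] at hx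
            rcases hx with rfl | hx
            · exact hs
            · apply h4
              simpa [FPath.states] using hx⟩
      have hFbij : Function.Bijective F := by
        constructor
        · rintro ⟨⟨⟨a, s'⟩, hp⟩, ⟨⟨st, steps⟩, h1, h2, h3, h4⟩⟩
            ⟨⟨⟨b, t⟩, hq⟩, ⟨⟨st', steps'⟩, g1, g2, g3, g4⟩⟩ heq
          have hst : st = s' := h2
          have hst' : st' = t := g2
          subst hst; subst hst'
          simp only [F, Subtype.mk.injEq, FPath.mk.injEq, List.cons.injEq, Prod.mk.injEq,
            true_and] at heq
          obtain ⟨⟨rfl, rfl⟩, rfl⟩ := heq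
          rfl
        · rintro ⟨⟨st, steps⟩, h1, h2, h3, h4⟩
          have hst : st = s := h2
          subst hst
          cases steps with
          | nil => exact absurd h3 (by simp [FPath.length])
          | cons x rest =>
            obtain ⟨a, s'⟩ := x
            obtain ⟨hleg, hp, hrest⟩ := h1
            refine ⟨⟨⟨⟨a, s'⟩, hp⟩, ⟨⟨s', rest⟩, hrest, rfl, ?_, ?_⟩⟩, rfl⟩
            · simpa [FPath.length] using h3
            · intro x hx
              apply h4
              simp only [FPath.states, List.map_cons, List.mem_cons] at hx ⊢
              tauto
      have htsum := (Equiv.ofBijective F hFbij).tsum_eq (fun ρ => M.cylProb σ s ρ.1)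
      unfold MDP.safeN
      rw [← htsum]
      have hterm : ∀ x, M.cylProb σ s ((Equiv.ofBijective F hFbij) x).1 =
          σ s [] x.1.1.1 * M.prob s x.1.1.1 x.1.1.2 *
            M.cylProb (shiftStrat σ s [x.1.1]) x.1.1.2 x.2.1 := by
        rintro ⟨⟨⟨a, s'⟩, hp⟩, ⟨⟨st, steps⟩, h1, h2, h3, h4⟩⟩
        have hst : s' = st := (h2 : st = s').symm
        subst hst
        show M.cylProb σ s ⟨s, (a, s') :: steps⟩ = _
        simp only [MDP.cylProb, cylProbP, if_pos rfl]
        rw [show wtP M.prob σ s [] ((a, s') :: steps) =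
            σ s [] a * M.prob s a s' * wtP M.prob σ s [(a, s')] steps from by
          simp [wtP, lastState]]
        rw [wtP_shift M.prob σ s a s' steps []]
        rfl
      rw [tsum_congr hterm, ENNReal.tsum_sigma']
      have hinner : ∀ p : {p : A × S // 0 < M.prob s p.1 p.2},
          (∑' (b : {ρ : FPath S A // M.IsPath ρ ∧ ρ.start = p.1.2 ∧ ρ.length = n ∧
              ∀ x ∈ ρ.states, x ∉ Bad}),
            σ s [] p.1.1 * M.prob s p.1.1 p.1.2 *
              M.cylProb (shiftStrat σ s [p.1]) p.1.2 b.1) =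
          σ s [] p.1.1 * M.prob s p.1.1 p.1.2 *
            safeAux M Bad n (shiftStrat σ s [p.1]) p.1.2 := by
        intro p
        rw [ENNReal.tsum_mul_left, ← ih (shiftStrat σ s [p.1]) p.1.2]
        rfl
      rw [tsum_congr hinner]
      have hz : ∀ q : A × S, ¬ 0 < M.prob s q.1 q.2 →
          σ s [] q.1 * M.prob s q.1 q.2 * safeAux M Bad n (shiftStrat σ s [q]) q.2 = 0 := by
        intro q hq
        have hq0 : M.prob s q.1 q.2 = 0 := by
          by_contra h
          exact hq (zero_lt_iff.mpr h)
        rw [hq0, mul_zero, zero_mul]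
      have hsub : (∑' p : {p : A × S // 0 < M.prob s p.1 p.2},
            σ s [] p.1.1 * M.prob s p.1.1 p.1.2 *
              safeAux M Bad n (shiftStrat σ s [p.1]) p.1.2) =
          ∑ q : A × S, σ s [] q.1 * M.prob s q.1 q.2 *
            safeAux M Bad n (shiftStrat σ s [q]) q.2 := by
        rw [tsum_fintype]
        rw [← Finset.sum_subtype (Finset.univ.filter fun q : A × S => 0 < M.prob s q.1 q.2)
          (by intro x; simp) (fun q : A × S => σ s [] q.1 * M.prob s q.1 q.2 *
            safeAux M Bad n (shiftStrat σ s [q]) q.2)]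
        refine Finset.sum_filter_of_ne ?_
        intro x _ hne
        by_contra h
        exact hne (hz x h)
      rw [hsub]
      rw [safeAux, if_neg hs]
      rw [Fintype.sum_prod_type
        (f := fun q : A × S => σ s [] q.1 * M.prob s q.1 q.2 *
          safeAux M Bad n (shiftStrat σ s [q]) q.2)]

lemma safeAux_le_one (M : MDP S A) (Bad : Set S) :
    ∀ (n : ℕ) (σ : Strat S A) (s : S), LocalStrat M σ s → safeAux M Bad n σ s ≤ 1 := by
  intro n
  induction n with
  | zero => intro σ s _; rw [safeAux]; split_ifs <;> simp
  | succ n ih =>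
    intro σ s hLS
    rw [safeAux]
    split_ifs with hs
    · exact zero_le
    · have h1 := (hLS [] trivial).1
      calc (∑ a, ∑ s', σ s [] a * M.prob s a s' *
              safeAux M Bad n (shiftStrat σ s [(a, s')]) s')
          ≤ ∑ a, σ s [] a := by
            refine Finset.sum_le_sum fun a _ => ?_
            by_cases hσa : σ s [] a = 0
            · simp [hσa]
            · have hleg : M.legal s a := (hLS [] trivial).2 a (zero_lt_iff.mpr hσa)
              calc (∑ s', σ s [] a * M.prob s a s' *
                      safeAux M Bad n (shiftStrat σ s [(a, s')]) s')
                  ≤ ∑ s', σ s [] a * M.prob s a s' := by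
                    refine Finset.sum_le_sum fun s' _ => ?_
                    by_cases hp : M.prob s a s' = 0
                    · simp [hp]
                    · calc σ s [] a * M.prob s a s' *
                            safeAux M Bad n (shiftStrat σ s [(a, s')]) s'
                          ≤ σ s [] a * M.prob s a s' * 1 :=
                            mul_le_mul_right (ih _ s'
                              (localStrat_shift hLS hleg (zero_lt_iff.mpr hp))) _
                        _ = σ s [] a * M.prob s a s' := mul_one _
                _ = σ s [] a * ∑ s', M.prob s a s' := by rw [Finset.mul_sum]
                _ = σ s [] a := by rw [sum_prob hleg, mul_one]
        _ = 1 := h1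

/-- Minimum positive transition probability (or 1). -/
noncomputable def pminM (M : MDP S A) : ℝ≥0∞ :=
  (Finset.univ : Finset (S × A × S)).inf
    (fun t => if 0 < M.prob t.1 t.2.1 t.2.2 then M.prob t.1 t.2.1 t.2.2 else 1)

noncomputable def epsM (M : MDP S A) : ℝ≥0∞ := pminM M ⊓ 1

lemma epsM_pos (M : MDP S A) : 0 < epsM M := by
  rw [epsM, lt_inf_iff]
  refine ⟨?_, zero_lt_one⟩
  rw [pminM, Finset.lt_inf_iff (by simp : (0 : ℝ≥0∞) < ⊤)]
  intro t _
  split_ifs with h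
  · exact h
  · exact zero_lt_one

lemma epsM_le_one (M : MDP S A) : epsM M ≤ 1 := inf_le_right

lemma epsM_le_prob {M : MDP S A} {s : S} {a : A} {s' : S} (h : 0 < M.prob s a s') :
    epsM M ≤ M.prob s a s' := by
  refine le_trans inf_le_left ?_
  refine le_trans (Finset.inf_le (Finset.mem_univ (s, a, s'))) ?_
  rw [if_pos h]

lemma upre_subset_succ (M : MDP S A) {Bad : Set S} (hBad : M.SinkSet Bad) :
    ∀ i, M.UPre Bad i ⊆ M.UPre Bad (i + 1) := by
  intro i
  induction i with
  | zero =>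
    intro b hb a ha
    exact ⟨b, hb, by rw [(hBad b hb).2 a ha]; norm_num⟩
  | succ i ih =>
    intro t ht a ha
    obtain ⟨s', hs', hp⟩ := ht a ha
    exact ⟨s', ih hs', hp⟩

lemma upre_mono (M : MDP S A) {Bad : Set S} (hBad : M.SinkSet Bad) {i j : ℕ} (h : i ≤ j) :
    M.UPre Bad i ⊆ M.UPre Bad j := by
  induction j with
  | zero => cases Nat.le_zero.mp h; exact subset_rfl
  | succ j ih =>
    rcases Nat.lt_or_ge i (j + 1) with hj | hj
    · exact (ih (Nat.lt_succ_iff.mp hj)).trans (upre_subset_succ M hBad j)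
    · cases le_antisymm h hj; exact subset_rfl

lemma safeAux_ub (M : MDP S A) (Bad : Set S) :
    ∀ (i : ℕ) (σ : Strat S A) (s : S), LocalStrat M σ s → s ∈ M.UPre Bad i →
      safeAux M Bad i σ s ≤ 1 - (epsM M) ^ i := by
  intro i
  induction i with
  | zero =>
    intro σ s _ hmem
    rw [safeAux, if_pos (show s ∈ Bad from hmem)]
    exact zero_le
  | succ i ih =>
    intro σ s hLS hmem
    rw [safeAux]
    split_ifs with hs
    · exact zero_le
    · have h1 := (hLS [] trivial).1
      have hkey : ∀ a, (∑ s', σ s [] a * M.prob s a s' *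
            safeAux M Bad i (shiftStrat σ s [(a, s')]) s')
          ≤ σ s [] a * (1 - (epsM M) ^ (i + 1)) := by
        intro a
        by_cases hσa : σ s [] a = 0
        · simp [hσa]
        · have hleg : M.legal s a := (hLS [] trivial).2 a (zero_lt_iff.mpr hσa)
          obtain ⟨s0, hs0mem, hs0pos⟩ := hmem a hleg
          have hrw : (∑ s', σ s [] a * M.prob s a s' *
                safeAux M Bad i (shiftStrat σ s [(a, s')]) s')
              = σ s [] a * ∑ s', M.prob s a s' *
                safeAux M Bad i (shiftStrat σ s [(a, s')]) s' := by
            rw [Finset.mul_sum]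
            exact Finset.sum_congr rfl fun s' _ => by ring
          rw [hrw]
          refine mul_le_mul_right ?_ _
          -- inner bound
          rw [← Finset.add_sum_erase _ _ (Finset.mem_univ s0)]
          refine ENNReal.le_sub_of_add_le_right
            (((pow_le_one' (epsM_le_one M) (i + 1)).trans_lt ENNReal.one_lt_top).ne) ?_
          have hX0 : safeAux M Bad i (shiftStrat σ s [(a, s0)]) s0 ≤ 1 - (epsM M) ^ i :=
            ih _ s0 (localStrat_shift hLS hleg hs0pos) hs0mem
          have hrest : (∑ s' ∈ Finset.univ.erase s0, M.prob s a s' *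
                safeAux M Bad i (shiftStrat σ s [(a, s')]) s')
              ≤ ∑ s' ∈ Finset.univ.erase s0, M.prob s a s' := by
            refine Finset.sum_le_sum fun s' _ => ?_
            by_cases hp : M.prob s a s' = 0
            · simp [hp]
            · calc M.prob s a s' * safeAux M Bad i (shiftStrat σ s [(a, s')]) s'
                  ≤ M.prob s a s' * 1 := mul_le_mul_right
                    (safeAux_le_one M Bad i _ s'
                      (localStrat_shift hLS hleg (zero_lt_iff.mpr hp))) _
                _ = M.prob s a s' := mul_one _
          have heps : (epsM M) ^ (i + 1) ≤ M.prob s a s0 * (epsM M) ^ i := by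
            rw [pow_succ, mul_comm]
            exact mul_le_mul_left (epsM_le_prob hs0pos) _
          calc M.prob s a s0 * safeAux M Bad i (shiftStrat σ s [(a, s0)]) s0
                + (∑ s' ∈ Finset.univ.erase s0, M.prob s a s' *
                    safeAux M Bad i (shiftStrat σ s [(a, s')]) s')
                + (epsM M) ^ (i + 1)
              ≤ M.prob s a s0 * (1 - (epsM M) ^ i)
                + (∑ s' ∈ Finset.univ.erase s0, M.prob s a s')
                + M.prob s a s0 * (epsM M) ^ i := by
                gcongr
            _ = (M.prob s a s0 * (1 - (epsM M) ^ i) + M.prob s a s0 * (epsM M) ^ i)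
                + (∑ s' ∈ Finset.univ.erase s0, M.prob s a s') := by
                rw [add_right_comm]
            _ = M.prob s a s0 + (∑ s' ∈ Finset.univ.erase s0, M.prob s a s') := by
                rw [← mul_add, tsub_add_cancel_of_le (pow_le_one' (epsM_le_one M) i), mul_one]
            _ = ∑ s', M.prob s a s' := Finset.add_sum_erase _ _ (Finset.mem_univ s0)
            _ = 1 := sum_prob hleg
      calc (∑ a, ∑ s', σ s [] a * M.prob s a s' *
              safeAux M Bad i (shiftStrat σ s [(a, s')]) s')
          ≤ ∑ a, σ s [] a * (1 - (epsM M) ^ (i + 1)) := Finset.sum_le_sum fun a _ => hkey a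
        _ = (∑ a, σ s [] a) * (1 - (epsM M) ^ (i + 1)) := by rw [← Finset.sum_mul]
        _ = 1 - (epsM M) ^ (i + 1) := by rw [h1, one_mul]

lemma good_action (M : MDP S A) (Bad : Set S) (hBad : M.SinkSet Bad) [Nonempty S]
    {s : S} (hs : s ∈ M.GoodSet Bad) :
    ∃ a, M.legal s a ∧ ∀ s', 0 < M.prob s a s' → s' ∈ M.GoodSet Bad := by
  by_contra h
  push_neg at h
  have h' : ∀ a, ∃ N, M.legal s a → ∃ s', 0 < M.prob s a s' ∧ s' ∈ M.UPre Bad N := by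
    intro a
    by_cases ha : M.legal s a
    · obtain ⟨s', hp, hs'⟩ := h a ha
      have hmem : s' ∈ ⋃ i, M.UPre Bad i := by
        by_contra hc
        exact hs' hc
      obtain ⟨i, hi⟩ := Set.mem_iUnion.mp hmem
      exact ⟨i, fun _ => ⟨s', hp, hi⟩⟩
    · exact ⟨0, fun hl => absurd hl ha⟩
  choose N hN using h'
  have hmem : s ∈ M.UPre Bad (Finset.univ.sup N + 1) := by
    intro a ha
    obtain ⟨s', hp, hup⟩ := hN a ha
    exact ⟨s', upre_mono M hBad (Finset.le_sup (Finset.mem_univ a)) hup, hp⟩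
  exact hs (Set.mem_iUnion.mpr ⟨Finset.univ.sup N + 1, hmem⟩)

lemma good_not_bad {M : MDP S A} {Bad : Set S} {s : S} (hs : s ∈ M.GoodSet Bad) :
    s ∉ Bad := fun hb => hs (Set.mem_iUnion.mpr ⟨0, hb⟩)

end Stmt10Aux


/-- for every state `s`, `Val(s) = 1` iff `s ∈ Good`. -/
theorem stmt10 {S : Type u} {A : Type v} [Fintype S] [Fintype A] [Nonempty S] [Nonempty A]
    (M : MDP S A) (Bad : Set S) (hBad : M.SinkSet Bad) (s : S) :
    M.safeVal Bad s = 1 ↔ s ∈ M.GoodSet Bad := by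
  constructor
  · intro hval
    by_contra hsG
    have hmem : s ∈ ⋃ i, M.UPre Bad i := by
      by_contra hc
      exact hsG hc
    obtain ⟨i, hi⟩ := Set.mem_iUnion.mp hmem
    have hub : M.safeVal Bad s ≤ 1 - (epsM M) ^ i := by
      refine iSup_le fun σ => iSup_le fun hσ => ?_
      refine le_trans (iInf_le _ i) ?_
      rw [safeN_eq_safeAux]
      exact safeAux_ub M Bad i σ s (isStrategy_localStrat hσ s) hi
    have hlt : (1 : ℝ≥0∞) - (epsM M) ^ i < 1 :=
      ENNReal.sub_lt_self ENNReal.one_ne_top one_ne_zero (pow_ne_zero i (epsM_pos M).ne')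
    rw [hval] at hub
    exact absurd (lt_of_le_of_lt hub hlt) (lt_irrefl _)
  · intro hs
    have hexf : ∀ t, ∃ a, M.legal t a ∧
        (t ∈ M.GoodSet Bad → ∀ s', 0 < M.prob t a s' → s' ∈ M.GoodSet Bad) := by
      intro t
      by_cases ht : t ∈ M.GoodSet Bad
      · obtain ⟨a, h1, h2⟩ := good_action M Bad hBad ht
        exact ⟨a, h1, fun _ => h2⟩
      · obtain ⟨a, ha⟩ := M.exists_legal t
        exact ⟨a, ha, fun h => absurd h ht⟩
    choose f hf1 hf2 using hexf
    set σg : Strat S A := fun t steps a => if a = f (lastState t steps) then 1 else 0 with hσg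
    have hstrat : M.IsStrategy σg := by
      intro t steps _
      constructor
      · simp [hσg]
      · intro a ha
        have : a = f (lastState t steps) := by
          by_contra hne
          rw [hσg] at ha
          simp only [if_neg hne] at ha
          exact lt_irrefl 0 ha
        rw [this]
        exact hf1 _
    have hone : ∀ n t, t ∈ M.GoodSet Bad → safeAux M Bad n σg t = 1 := by
      intro n
      induction n with
      | zero =>
        intro t ht
        rw [safeAux, if_neg (good_not_bad ht)]
      | succ n ih =>
        intro t ht
        have htB : t ∉ Bad := good_not_bad ht
        rw [safeAux, if_neg htB]
        have hcollapse : ∀ a, a ≠ f t → (∑ s', σg t [] a * M.prob t a s' *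
            safeAux M Bad n (shiftStrat σg t [(a, s')]) s') = 0 := by
          intro a hne
          refine Finset.sum_eq_zero fun s' _ => ?_
          have : σg t [] a = 0 := by
            show (if a = f (lastState t []) then (1 : ℝ≥0∞) else 0) = 0
            exact if_neg (show a ≠ f (lastState t []) from hne)
          rw [this, zero_mul, zero_mul]
        rw [Finset.sum_eq_single (f t)]
        · have hσft : σg t [] (f t) = 1 := by
            show (if f t = f (lastState t []) then (1 : ℝ≥0∞) else 0) = 1
            exact if_pos rfl
          have hterm : ∀ s', σg t [] (f t) * M.prob t (f t) s' *
              safeAux M Bad n (shiftStrat σg t [(f t, s')]) s' = M.prob t (f t) s' := by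
            intro s'
            rw [hσft, one_mul]
            by_cases hp : M.prob t (f t) s' = 0
            · rw [hp, zero_mul]
            · have hgood : s' ∈ M.GoodSet Bad := hf2 t ht s' (zero_lt_iff.mpr hp)
              have hcongr : safeAux M Bad n (shiftStrat σg t [(f t, s')]) s' =
                  safeAux M Bad n σg s' := by
                refine safeAux_congr M Bad n _ _ s' fun pre b => ?_
                rfl
              rw [hcongr, ih s' hgood, mul_one]
          rw [Finset.sum_congr rfl fun s' _ => hterm s']
          exact sum_prob (hf1 t)
        · intro a _ hne
          exact hcollapse a hne
        · intro h
          exact absurd (Finset.mem_univ (f t)) h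
    apply le_antisymm
    · refine iSup_le fun σ => iSup_le fun hσ => ?_
      refine le_trans (iInf_le _ 0) ?_
      rw [safeN_eq_safeAux]
      exact safeAux_le_one M Bad 0 σ s (isStrategy_localStrat hσ s)
    · have hps : M.prSafe σg s Bad = 1 := by
        rw [MDP.prSafe]
        have : ∀ n : ℕ, M.safeN σg s Bad n = 1 := fun n => by
          rw [safeN_eq_safeAux]; exact hone n s hs
        simp [this]
      calc (1 : ℝ≥0∞) = M.prSafe σg s Bad := hps.symm
        _ ≤ ⨆ (_ : M.IsStrategy σg), M.prSafe σg s Bad :=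
          le_iSup (fun _ : M.IsStrategy σg => M.prSafe σg s Bad) hstrat
        _ ≤ M.safeVal Bad s := le_iSup (fun σ => ⨆ (_ : M.IsStrategy σ), M.prSafe σ s Bad) σg
end

section
/- For every state s ∈ S and every strategy σ ∈ Σ^Opt, Val(s) = Pr_{σ,s}(□¬Bad). -/
open scoped ENNReal NNReal Classical
open Filter

universe u v

variable {S : Type u} {A : Type v}

section AuxStmt15

variable {S : Type u} {A : Type v} [Fintype S] [Fintype A]

lemma lastState_append' (s : S) (l₁ l₂ : List (A × S)) :
    lastState s (l₁ ++ l₂) = lastState (lastState s l₁) l₂ := by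
  induction l₁ generalizing s with
  | nil => rfl
  | cons p rest ih => cases p; exact ih _

lemma isPathFrom_append' (M : MDP S A) {s : S} {pre : List (A × S)} {a : A} {s' : S}
    (h : M.IsPathFrom s pre) (hl : M.legal (lastState s pre) a)
    (hp : 0 < M.prob (lastState s pre) a s') :
    M.IsPathFrom s (pre ++ [(a, s')]) := by
  induction pre generalizing s with
  | nil => exact ⟨hl, hp, trivial⟩
  | cons p rest ih =>
    obtain ⟨p1, p2⟩ := p
    obtain ⟨h1, h2, h3⟩ := h
    exact ⟨h1, h2, ih h3 hl hp⟩

lemma wtP_nil (p : S → A → S → ℝ≥0∞) (σ : Strat S A) (s₀ : S) (pre : List (A × S)) :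
    wtP p σ s₀ pre [] = 1 := by
  simp [wtP]

lemma wtP_cons (p : S → A → S → ℝ≥0∞) (σ : Strat S A) (s₀ : S) (pre : List (A × S))
    (a : A) (s' : S) (rest : List (A × S)) :
    wtP p σ s₀ pre ((a, s') :: rest) =
      σ s₀ pre a * p (lastState s₀ pre) a s' * wtP p σ s₀ (pre ++ [(a, s')]) rest := by
  rw [wtP]

/-- The condition on step lists in `safeN`. -/
def SCond (M : MDP S A) (Bad : Set S) (t : S) (n : ℕ) (l : List (A × S)) : Prop :=
  M.IsPathFrom t l ∧ l.length = n ∧ ∀ x ∈ t :: l.map Prod.snd, x ∉ Bad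

/-- The "safe mass after prefix `pre`" quantity. -/
noncomputable def FF (M : MDP S A) (Bad : Set S) (σ : Strat S A) (s₀ : S)
    (pre : List (A × S)) (n : ℕ) : ℝ≥0∞ :=
  ∑' l : List (A × S),
    if SCond M Bad (lastState s₀ pre) n l then wtP M.prob σ s₀ pre l else 0

lemma safeN_eq_FF (M : MDP S A) (Bad : Set S) (σ : Strat S A) (s : S) (n : ℕ) :
    M.safeN σ s Bad n = FF M Bad σ s [] n := by
  have hFF : FF M Bad σ s [] n =
      ∑' l : {l : List (A × S) // SCond M Bad s n l}, wtP M.prob σ s [] l.1 := by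
    rw [FF]
    simp only [show lastState s ([] : List (A × S)) = s from rfl]
    have h1 : (∑' l : List (A × S),
        if SCond M Bad s n l then wtP M.prob σ s [] l else 0)
        = ∑' l : List (A × S),
          Set.indicator {l : List (A × S) | SCond M Bad s n l}
            (fun l => wtP M.prob σ s [] l) l := by
      refine tsum_congr fun l => ?_
      by_cases hC : SCond M Bad s n l
      · rw [if_pos hC]
        exact (Set.indicator_of_mem (Set.mem_setOf.mpr hC) (fun m : List (A × S) => wtP M.prob σ s [] m)).symm
      · rw [if_neg hC]
        exact (Set.indicator_of_notMem (show l ∉ {l : List (A × S) | SCond M Bad s n l} from hC) (fun m : List (A × S) => wtP M.prob σ s [] m)).symm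
    rw [h1, ← tsum_subtype]
    rfl
  let e : {ρ : FPath S A // M.IsPath ρ ∧ ρ.start = s ∧ ρ.length = n ∧
      ∀ x ∈ ρ.states, x ∉ Bad} ≃ {l : List (A × S) // SCond M Bad s n l} :=
    { toFun := fun ρ => ⟨ρ.1.steps, by
        obtain ⟨⟨st, steps⟩, h1, h2, h3, h4⟩ := ρ
        cases h2
        exact ⟨h1, h3, h4⟩⟩
      invFun := fun l => ⟨⟨s, l.1⟩, l.2.1, rfl, l.2.2.1, l.2.2.2⟩
      left_inv := fun ρ => Subtype.ext (by
        obtain ⟨⟨st, steps⟩, -, h2, -⟩ := ρ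
        cases h2
        rfl)
      right_inv := fun l => rfl }
  calc M.safeN σ s Bad n
      = ∑' ρ : {ρ : FPath S A // M.IsPath ρ ∧ ρ.start = s ∧ ρ.length = n ∧
          ∀ x ∈ ρ.states, x ∉ Bad}, wtP M.prob σ s [] (e ρ).1 := by
        refine tsum_congr fun ρ => ?_
        have h2 := ρ.2.2.1
        rw [MDP.cylProb, cylProbP, if_pos h2, h2]
        rfl
    _ = ∑' l : {l : List (A × S) // SCond M Bad s n l}, wtP M.prob σ s [] l.1 :=
        e.tsum_eq fun l => wtP M.prob σ s [] l.1
    _ = FF M Bad σ s [] n := hFF.symm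

lemma FF_zero (M : MDP S A) (Bad : Set S) (σ : Strat S A) (s₀ : S) (pre : List (A × S)) :
    FF M Bad σ s₀ pre 0 = if lastState s₀ pre ∉ Bad then 1 else 0 := by
  by_cases ht : lastState s₀ pre ∈ Bad
  · rw [if_neg (not_not_intro ht), FF]
    convert tsum_zero with l
    rw [if_neg]
    rintro ⟨-, -, hav⟩
    exact hav _ List.mem_cons_self ht
  · rw [if_pos ht, FF, tsum_eq_single ([] : List (A × S))]
    · rw [if_pos, wtP_nil]
      refine ⟨trivial, rfl, ?_⟩
      intro x hx
      simp only [List.map_nil, List.mem_singleton] at hx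
      subst hx; exact ht
    · intro l hl
      rw [if_neg]
      rintro ⟨-, hlen, -⟩
      exact hl (List.length_eq_zero_iff.mp hlen)

lemma FF_succ (M : MDP S A) (Bad : Set S) (σ : Strat S A) (s₀ : S) (pre : List (A × S))
    (n : ℕ) :
    FF M Bad σ s₀ pre (n + 1) =
      ∑ a : A, ∑ s' : S,
        if lastState s₀ pre ∉ Bad ∧ M.legal (lastState s₀ pre) a ∧
            0 < M.prob (lastState s₀ pre) a s' then
          σ s₀ pre a * M.prob (lastState s₀ pre) a s' * FF M Bad σ s₀ (pre ++ [(a, s')]) n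
        else 0 := by
  set t := lastState s₀ pre with hts
  set h : List (A × S) → ℝ≥0∞ :=
    fun l => if SCond M Bad t (n + 1) l then wtP M.prob σ s₀ pre l else 0 with hh
  have hg : Function.Injective (fun p : (A × S) × List (A × S) => p.1 :: p.2) := by
    rintro ⟨a, l⟩ ⟨b, m⟩ hab
    simp only [List.cons.injEq] at hab
    simp [hab.1, hab.2]
  have hsupp : Function.support h ⊆
      Set.range (fun p : (A × S) × List (A × S) => p.1 :: p.2) := by
    intro l hl
    cases l with
    | nil =>
      exfalso
      apply hl
      rw [hh]
      simp only
      rw [if_neg]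
      rintro ⟨-, hlen, -⟩
      simp at hlen
    | cons q rest => exact ⟨(q, rest), rfl⟩
  have hre : FF M Bad σ s₀ pre (n + 1)
      = ∑' p : (A × S) × List (A × S), h (p.1 :: p.2) := by
    rw [FF, ← hts]
    exact (hg.tsum_eq hsupp).symm
  have hcond : ∀ (a : A) (s' : S) (rest : List (A × S)),
      SCond M Bad t (n + 1) ((a, s') :: rest) ↔
        (t ∉ Bad ∧ M.legal t a ∧ 0 < M.prob t a s') ∧ SCond M Bad s' n rest := by
    intro a s' rest
    simp only [SCond, MDP.IsPathFrom, List.map_cons, List.length_cons,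
      Nat.add_right_cancel_iff, List.forall_mem_cons]
    tauto
  have hFF' : ∀ (a : A) (s' : S), FF M Bad σ s₀ (pre ++ [(a, s')]) n =
      ∑' rest : List (A × S),
        if SCond M Bad s' n rest then wtP M.prob σ s₀ (pre ++ [(a, s')]) rest else 0 := by
    intro a s'
    rw [FF]
    have : lastState s₀ (pre ++ [(a, s')]) = s' := by
      rw [lastState_append']
      rfl
    rw [this]
  have key : ∀ (a : A) (s' : S), (∑' rest : List (A × S), h ((a, s') :: rest)) =
      if t ∉ Bad ∧ M.legal t a ∧ 0 < M.prob t a s' then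
        σ s₀ pre a * M.prob t a s' * FF M Bad σ s₀ (pre ++ [(a, s')]) n
      else 0 := by
    intro a s'
    by_cases hD : t ∉ Bad ∧ M.legal t a ∧ 0 < M.prob t a s'
    · rw [if_pos hD, hFF', mul_assoc, ← ENNReal.tsum_mul_left, ← ENNReal.tsum_mul_left]
      refine tsum_congr fun rest => ?_
      rw [hh]
      simp only
      by_cases hC : SCond M Bad s' n rest
      · rw [if_pos ((hcond a s' rest).mpr ⟨hD, hC⟩), if_pos hC, wtP_cons, ← hts, mul_assoc]
      · rw [if_neg (fun hx => hC ((hcond a s' rest).mp hx).2), if_neg hC,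
          mul_zero, mul_zero]
    · rw [if_neg hD]
      refine (tsum_congr fun rest => ?_).trans tsum_zero
      rw [hh]
      simp only
      rw [if_neg (fun hx => hD ((hcond a s' rest).mp hx).1)]
  rw [hre, ENNReal.tsum_prod', tsum_fintype, Fintype.sum_prod_type]
  refine Finset.sum_congr rfl fun a _ => Finset.sum_congr rfl fun s' _ => ?_
  exact key a s'

lemma safeVal_le_one (M : MDP S A) (Bad : Set S) (s : S) : M.safeVal Bad s ≤ 1 := by
  refine iSup₂_le fun σ' hσ' => ?_
  refine le_trans (iInf_le _ 0) ?_
  rw [safeN_eq_FF, FF_zero]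
  split <;> simp

lemma safeVal_bad (M : MDP S A) (Bad : Set S) {s : S} (hs : s ∈ Bad) :
    M.safeVal Bad s = 0 := by
  refine le_antisymm (iSup₂_le fun σ' hσ' => ?_) zero_le
  refine le_trans (iInf_le _ 0) ?_
  rw [safeN_eq_FF, FF_zero]
  exact le_of_eq (if_neg (fun hcon => hcon hs))

lemma main_le_FF (M : MDP S A) (Bad : Set S) (σ : Strat S A) (hσ : M.IsStrategy σ)
    (hopt : M.SigmaOptS Bad σ) (s₀ : S) :
    ∀ (n : ℕ) (pre : List (A × S)), M.IsPathFrom s₀ pre →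
      M.safeVal Bad (lastState s₀ pre) ≤ FF M Bad σ s₀ pre n := by
  intro n
  induction n with
  | zero =>
    intro pre _
    rw [FF_zero]
    by_cases ht : lastState s₀ pre ∈ Bad
    · rw [if_neg (not_not_intro ht), safeVal_bad M Bad ht]
    · rw [if_pos ht]
      exact safeVal_le_one M Bad _
  | succ n ih =>
    intro pre hpre
    rw [FF_succ]
    set t := lastState s₀ pre with hts
    by_cases ht : t ∈ Bad
    · rw [safeVal_bad M Bad ht]
      exact zero_le
    have h1 : (∑ a, σ s₀ pre a) = 1 := (hσ s₀ pre hpre).1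
    calc M.safeVal Bad t = (∑ a, σ s₀ pre a) * M.safeVal Bad t := by rw [h1, one_mul]
      _ = ∑ a, σ s₀ pre a * M.safeVal Bad t := Finset.sum_mul _ _ _
      _ ≤ ∑ a : A, ∑ s' : S,
          if t ∉ Bad ∧ M.legal t a ∧ 0 < M.prob t a s' then
            σ s₀ pre a * M.prob t a s' * FF M Bad σ s₀ (pre ++ [(a, s')]) n
          else 0 := by
        refine Finset.sum_le_sum fun a _ => ?_
        by_cases ha : 0 < σ s₀ pre a
        · obtain ⟨hleg, hbell⟩ := hopt s₀ pre hpre a ha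
          rw [← hts] at hbell hleg
          rw [hbell, Finset.mul_sum]
          refine Finset.sum_le_sum fun s' _ => ?_
          by_cases hp : 0 < M.prob t a s'
          · rw [if_pos ⟨ht, hleg, hp⟩, ← mul_assoc]
            have hlast : lastState s₀ (pre ++ [(a, s')]) = s' := by
              rw [lastState_append']
              rfl
            have := ih (pre ++ [(a, s')]) (isPathFrom_append' M hpre hleg hp)
            rw [hlast] at this
            exact mul_le_mul_right this _
          · rw [show M.prob t a s' = 0 from le_zero_iff.mp (not_lt.mp hp), zero_mul,
              mul_zero]
            exact zero_le
        · rw [show σ s₀ pre a = 0 from le_zero_iff.mp (not_lt.mp ha), zero_mul]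
          exact zero_le

end AuxStmt15

/-- for every state `s` and every `σ ∈ Σ^Opt`, `Val(s) = Pr_{σ,s}(□¬Bad)`. -/
theorem stmt15 {S : Type u} {A : Type v} [Fintype S] [Fintype A] [Nonempty S] [Nonempty A]
    (M : MDP S A) (Bad : Set S) (hBad : M.SinkSet Bad)
    (s : S) (σ : Strat S A) (hσ : M.IsStrategy σ) (hopt : M.SigmaOptS Bad σ) :
    M.safeVal Bad s = M.prSafe σ s Bad := by
  refine le_antisymm ?_ ?_
  · rw [MDP.prSafe]
    refine le_iInf fun n => ?_
    rw [safeN_eq_FF]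
    have h0 : M.IsPathFrom s ([] : List (A × S)) := trivial
    have := main_le_FF M Bad σ hσ hopt s n [] h0
    exact this
  · exact le_iSup₂ (f := fun σ' (_ : M.IsStrategy σ') => M.prSafe σ' s Bad) σ hσ
end

section
/- For every state s₀ ∈ S' and every strategy σ ∈ Σ^Opt, E'_{σ,s₀}(MP) = E_{σ,s₀}(MP | □¬Bad). -/
open scoped ENNReal NNReal Classical
open Filter

universe u v

variable {S : Type u} {A : Type v}

namespace MDP
section Stmt18Aux

variable {S : Type u} {A : Type v}

lemma lastState_append (s : S) (l₁ l₂ : List (A × S)) :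
    lastState s (l₁ ++ l₂) = lastState (lastState s l₁) l₂ := by
  induction l₁ generalizing s with
  | nil => rfl
  | cons x xs ih => cases x; simp [lastState, ih]

@[simp] lemma lastState_nil (s : S) : lastState s ([] : List (A × S)) = s := rfl

@[simp] lemma lastState_single (s : S) (a : A) (s' : S) :
    lastState s [(a, s')] = s' := rfl

lemma wtP_nil (p : S → A → S → ℝ≥0∞) (σ : Strat S A) (s₀ : S) (pre : List (A × S)) :
    wtP p σ s₀ pre [] = 1 := by simp [wtP]

lemma wtP_cons (p : S → A → S → ℝ≥0∞) (σ : Strat S A) (s₀ : S) (pre : List (A × S))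
    (a : A) (s' : S) (l : List (A × S)) :
    wtP p σ s₀ pre ((a, s') :: l) =
      σ s₀ pre a * p (lastState s₀ pre) a s' * wtP p σ s₀ (pre ++ [(a, s')]) l := by
  simp [wtP]

variable [Fintype S] [Fintype A] (M : MDP S A)

lemma isPathFrom_append {s : S} {l₁ l₂ : List (A × S)} :
    M.IsPathFrom s (l₁ ++ l₂) ↔ M.IsPathFrom s l₁ ∧ M.IsPathFrom (lastState s l₁) l₂ := by
  induction l₁ generalizing s with
  | nil => simp [MDP.IsPathFrom]
  | cons x xs ih => cases x; simp [MDP.IsPathFrom, ih, lastState, and_assoc]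

lemma prob_pos_legal {s : S} {a : A} {s' : S} (h : M.prob s a s' ≠ 0) : M.legal s a := by
  cases hP : M.P s a with
  | none => exact absurd (by unfold MDP.prob; rw [hP]; rfl) h
  | some d => unfold MDP.legal; rw [hP]; rfl

lemma wtP_congr (p : S → A → S → ℝ≥0∞) {σ₁ σ₂ : Strat S A} {t : S}
    (H : ∀ steps, M.IsPathFrom t steps → ∀ a, σ₁ t steps a = σ₂ t steps a) :
    ∀ (l pre : List (A × S)), M.IsPathFrom t (pre ++ l) →
      wtP p σ₁ t pre l = wtP p σ₂ t pre l := by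
  intro l
  induction l with
  | nil => intro pre _; rw [wtP_nil, wtP_nil]
  | cons x xs ih =>
    intro pre h
    obtain ⟨a, s'⟩ := x
    have hpre : M.IsPathFrom t pre := ((M.isPathFrom_append).1 h).1
    have h' : M.IsPathFrom t ((pre ++ [(a, s')]) ++ xs) := by simpa using h
    rw [wtP_cons, wtP_cons, H pre hpre a, ih (pre ++ [(a, s')]) h']

/-- The `Bad`-killed transition kernel. -/
noncomputable def pBad (M : MDP S A) (Bad : Set S) : S → A → S → ℝ≥0∞ :=
  fun s a s' => if s' ∈ Bad then 0 else M.prob s a s'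

lemma wtP_kernel_congr (Bad : Set S) (σ : Strat S A) (t : S) :
    ∀ (l pre : List (A × S)), (∀ x ∈ l.map Prod.snd, x ∉ Bad) →
      wtP (pBad M Bad) σ t pre l = wtP M.prob σ t pre l := by
  intro l
  induction l with
  | nil => intro pre _; rw [wtP_nil, wtP_nil]
  | cons x xs ih =>
    intro pre h
    obtain ⟨a, s'⟩ := x
    have hs' : s' ∉ Bad := h s' (by simp)
    rw [wtP_cons, wtP_cons, ih (pre ++ [(a, s')]) (fun x hx => h x (by simp [hx]))]
    simp [pBad, hs']

lemma wtP_pBad_ne_zero (Bad : Set S) (σ : Strat S A) (t : S) :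
    ∀ (l pre : List (A × S)), wtP (pBad M Bad) σ t pre l ≠ 0 →
      M.IsPathFrom (lastState t pre) l ∧ ∀ x ∈ l.map Prod.snd, x ∉ Bad := by
  intro l
  induction l with
  | nil => intro pre _; exact ⟨trivial, by simp⟩
  | cons x xs ih =>
    intro pre h
    obtain ⟨a, s'⟩ := x
    rw [wtP_cons] at h
    simp only [ne_eq, mul_eq_zero, not_or] at h
    obtain ⟨⟨-, hp⟩, hw⟩ := h
    have hs' : s' ∉ Bad := by intro hmem; exact hp (by simp [pBad, hmem])
    have hprob : M.prob (lastState t pre) a s' ≠ 0 := by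
      intro h0; exact hp (by simp [pBad, h0])
    obtain ⟨hpath, hav⟩ := ih (pre ++ [(a, s')]) hw
    rw [lastState_append] at hpath
    refine ⟨⟨M.prob_pos_legal hprob, lt_of_le_of_ne (zero_le) (Ne.symm hprob), by simpa using hpath⟩, ?_⟩
    intro x hx
    simp only [List.map_cons, List.mem_cons] at hx
    rcases hx with rfl | hx
    · exact hs'
    · exact hav x hx

/-- Recursive form of the sum, over all continuations of length `n`, of
`wtP p σ s₀ pre l * f (lastState s₀ (pre ++ l))`. -/
noncomputable def extS (p : S → A → S → ℝ≥0∞) (σ : Strat S A) (s₀ : S)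
    (f : S → ℝ≥0∞) : List (A × S) → ℕ → ℝ≥0∞
  | pre, 0 => f (lastState s₀ pre)
  | pre, n + 1 => ∑ a : A, ∑ s' : S, σ s₀ pre a * p (lastState s₀ pre) a s' *
      extS p σ s₀ f (pre ++ [(a, s')]) n

/-- Lists of length `n+1` are a cons of a head and a list of length `n`. -/
def consEquiv (X : Type*) (n : ℕ) :
    {l : List X // l.length = n + 1} ≃ X × {l : List X // l.length = n} where
  toFun := fun l => match l with
    | ⟨x :: xs, h⟩ => (x, ⟨xs, by simpa using h⟩)
  invFun := fun y => ⟨y.1 :: y.2.1, by simp [y.2.2]⟩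
  left_inv := fun l => by
    obtain ⟨l, h⟩ := l
    cases l with
    | nil => simp at h
    | cons x xs => rfl
  right_inv := fun y => rfl

lemma instUniqueLen0 (X : Type*) : ∀ l : {l : List X // l.length = 0}, l = ⟨[], rfl⟩ := by
  rintro ⟨l, hl⟩
  cases l with
  | nil => rfl
  | cons x xs => simp at hl

lemma tsum_wtP (p : S → A → S → ℝ≥0∞) (σ : Strat S A) (s₀ : S) (f : S → ℝ≥0∞) :
    ∀ (n : ℕ) (pre : List (A × S)),
      (∑' l : {l : List (A × S) // l.length = n},
        wtP p σ s₀ pre l.1 * f (lastState s₀ (pre ++ l.1))) = extS p σ s₀ f pre n := by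
  intro n
  induction n with
  | zero =>
    intro pre
    rw [tsum_eq_single (⟨[], rfl⟩ : {l : List (A × S) // l.length = 0})
      (fun l hl => absurd (instUniqueLen0 _ l) hl)]
    simp [wtP_nil, extS]
  | succ n ih =>
    intro pre
    rw [← Equiv.tsum_eq (consEquiv (A × S) n).symm
      (fun l : {l : List (A × S) // l.length = n + 1} =>
        wtP p σ s₀ pre l.1 * f (lastState s₀ (pre ++ l.1)))]
    have hval : ∀ (y : (A × S) × {l : List (A × S) // l.length = n}),
        ((consEquiv (A × S) n).symm y).1 = y.1 :: y.2.1 := fun y => rfl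
    rw [show (fun y : (A × S) × {l : List (A × S) // l.length = n} =>
        wtP p σ s₀ pre ((consEquiv (A × S) n).symm y).1 *
          f (lastState s₀ (pre ++ ((consEquiv (A × S) n).symm y).1)))
      = fun y : (A × S) × {l : List (A × S) // l.length = n} =>
        wtP p σ s₀ pre (y.1 :: y.2.1) * f (lastState s₀ (pre ++ y.1 :: y.2.1)) from
        funext fun y => by rw [hval]]
    rw [ENNReal.tsum_prod', tsum_fintype, Fintype.sum_prod_type]
    show (∑ a : A, ∑ s' : S, ∑' l : {l : List (A × S) // l.length = n},
        wtP p σ s₀ pre ((a, s') :: l.1) * f (lastState s₀ (pre ++ (a, s') :: l.1)))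
      = extS p σ s₀ f pre (n + 1)
    rw [extS]
    refine Finset.sum_congr rfl fun a _ => Finset.sum_congr rfl fun s' _ => ?_
    rw [← ih (pre ++ [(a, s')]), ← ENNReal.tsum_mul_left]
    refine tsum_congr fun l => ?_
    rw [wtP_cons]
    have hl : lastState s₀ (pre ++ (a, s') :: l.1)
        = lastState s₀ ((pre ++ [(a, s')]) ++ l.1) := by simp
    rw [hl, mul_assoc]

variable (Bad : Set S)

lemma safeN_eq (σ : Strat S A) (t : S) (n : ℕ) :
    M.safeN σ t Bad n =
      if t ∈ Bad then 0 else extS (M.pBad Bad) σ t (fun _ => 1) [] n := by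
  unfold MDP.safeN
  split
  next ht =>
    have : IsEmpty {ρ : FPath S A //
        M.IsPath ρ ∧ ρ.start = t ∧ ρ.length = n ∧ ∀ x ∈ ρ.states, x ∉ Bad} := by
      refine ⟨fun ⟨ρ, _, hst, _, hav⟩ => hav t ?_ ht⟩
      rw [← hst]
      exact List.mem_cons_self
    rw [tsum_empty]
  next ht =>
    rw [← tsum_wtP]
    have hterm : ∀ ρ : {ρ : FPath S A //
        M.IsPath ρ ∧ ρ.start = t ∧ ρ.length = n ∧ ∀ x ∈ ρ.states, x ∉ Bad},
        M.cylProb σ t ρ.1 = wtP (M.pBad Bad) σ t [] ρ.1.steps := by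
      rintro ⟨ρ, hp, hst, hlen, hav⟩
      unfold MDP.cylProb cylProbP
      rw [if_pos hst]
      obtain ⟨st, steps⟩ := ρ
      simp only at hst
      subst hst
      rw [M.wtP_kernel_congr Bad σ st steps []
        (fun x hx => hav x (List.mem_cons_of_mem _ hx))]
    rw [tsum_congr hterm]
    refine (tsum_eq_tsum_of_ne_zero_bij
      (f := fun l : {l : List (A × S) // l.length = n} =>
        wtP (M.pBad Bad) σ t [] l.1 * (fun _ : S => (1 : ℝ≥0∞)) (lastState t ([] ++ l.1)))
      (g := fun ρ : {ρ : FPath S A //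
        M.IsPath ρ ∧ ρ.start = t ∧ ρ.length = n ∧ ∀ x ∈ ρ.states, x ∉ Bad} =>
        wtP (M.pBad Bad) σ t [] ρ.1.steps)
      (fun x => ⟨x.1.1.steps, x.1.2.2.2.1⟩) ?_ ?_ ?_).symm
    · rintro ⟨⟨⟨st₁, l₁⟩, h₁⟩, hx₁⟩ ⟨⟨⟨st₂, l₂⟩, h₂⟩, hx₂⟩ h
      simp only [Subtype.mk.injEq] at h ⊢
      simp only [Subtype.mk.injEq, FPath.mk.injEq]
      exact ⟨h₁.2.1.trans h₂.2.1.symm, congrArg Subtype.val h⟩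
    · rintro ⟨l, hl⟩ hne
      simp only [Function.mem_support, mul_one] at hne
      obtain ⟨hpath, hav⟩ := M.wtP_pBad_ne_zero Bad σ t l [] hne
      refine ⟨⟨⟨⟨t, l⟩, hpath, rfl, hl, ?_⟩, by simpa using hne⟩, rfl⟩
      intro x hx
      rcases List.mem_cons.1 hx with rfl | hx
      · exact ht
      · exact hav x hx
    · intro x
      simp [mul_one]

lemma safeVal_bad {t : S} (ht : t ∈ Bad) : M.safeVal Bad t = 0 := by
  refine le_antisymm (iSup₂_le fun τ hτ => ?_) (zero_le)
  refine le_trans (iInf_le _ 0) ?_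
  rw [M.safeN_eq Bad τ t 0, if_pos ht]

lemma safeVal_le_one (t : S) : M.safeVal Bad t ≤ 1 := by
  refine iSup₂_le fun τ hτ => le_trans (iInf_le _ 0) ?_
  rw [M.safeN_eq Bad τ t 0]
  split
  · exact zero_le_one
  · rw [extS]

lemma safeVal_ne_top (t : S) : M.safeVal Bad t ≠ ⊤ :=
  ne_top_of_le_ne_top ENNReal.one_ne_top (M.safeVal_le_one Bad t)

lemma extS_mono (p : S → A → S → ℝ≥0∞) (σ : Strat S A) (t : S) {f g : S → ℝ≥0∞}
    (hfg : ∀ s, f s ≤ g s) :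
    ∀ (n : ℕ) (pre : List (A × S)), extS p σ t f pre n ≤ extS p σ t g pre n := by
  intro n
  induction n with
  | zero => intro pre; rw [extS, extS]; exact hfg _
  | succ n ih =>
    intro pre
    rw [extS, extS]
    exact Finset.sum_le_sum fun a _ => Finset.sum_le_sum fun s' _ =>
      mul_le_mul_right (ih _) _

lemma extS_val {τ : Strat S A} (hτ : M.IsStrategy τ) {t : S}
    (hO : ∀ steps, M.IsPathFrom t steps → ∀ a, 0 < τ t steps a →
      M.OptS Bad (lastState t steps) a) :
    ∀ (n : ℕ) (pre : List (A × S)), M.IsPathFrom t pre →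
      extS (M.pBad Bad) τ t (M.safeVal Bad) pre n = M.safeVal Bad (lastState t pre) := by
  intro n
  induction n with
  | zero => intro pre _; rw [extS]
  | succ n ih =>
    intro pre hpre
    rw [extS]
    have hstep : ∀ a : A, 0 < τ t pre a →
        (∑ s' : S, τ t pre a * M.pBad Bad (lastState t pre) a s' *
          extS (M.pBad Bad) τ t (M.safeVal Bad) (pre ++ [(a, s')]) n)
        = τ t pre a * M.safeVal Bad (lastState t pre) := by
      intro a ha
      obtain ⟨hleg, hEq⟩ := hO pre hpre a ha
      have : ∀ s' : S,
          τ t pre a * M.pBad Bad (lastState t pre) a s' *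
            extS (M.pBad Bad) τ t (M.safeVal Bad) (pre ++ [(a, s')]) n
          = τ t pre a * (M.prob (lastState t pre) a s' * M.safeVal Bad s') := by
        intro s'
        by_cases hb : s' ∈ Bad
        · rw [M.safeVal_bad Bad hb]
          simp [pBad, hb]
        · by_cases hp : M.prob (lastState t pre) a s' = 0
          · simp [pBad, hb, hp]
          · have hpath' : M.IsPathFrom t (pre ++ [(a, s')]) :=
              (M.isPathFrom_append).2 ⟨hpre, hleg,
                lt_of_le_of_ne (zero_le) (Ne.symm hp), trivial⟩
            rw [ih _ hpath', lastState_append]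
            simp [pBad, hb, mul_assoc]
      rw [Finset.sum_congr rfl fun s' _ => this s', ← Finset.mul_sum, ← hEq]
    have hzero : ∀ a : A, τ t pre a = 0 →
        (∑ s' : S, τ t pre a * M.pBad Bad (lastState t pre) a s' *
          extS (M.pBad Bad) τ t (M.safeVal Bad) (pre ++ [(a, s')]) n) = 0 := by
      intro a ha; simp [ha]
    have : (∑ a : A, ∑ s' : S, τ t pre a * M.pBad Bad (lastState t pre) a s' *
          extS (M.pBad Bad) τ t (M.safeVal Bad) (pre ++ [(a, s')]) n)
        = ∑ a : A, τ t pre a * M.safeVal Bad (lastState t pre) := by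
      refine Finset.sum_congr rfl fun a _ => ?_
      by_cases ha : τ t pre a = 0
      · rw [hzero a ha, ha, zero_mul]
      · exact hstep a (lt_of_le_of_ne (zero_le) (Ne.symm ha))
    rw [this, ← Finset.sum_mul, (hτ t pre hpre).1, one_mul]

lemma safeVal_le_prSafe {τ : Strat S A} (hτ : M.IsStrategy τ) {t : S}
    (hO : ∀ steps, M.IsPathFrom t steps → ∀ a, 0 < τ t steps a →
      M.OptS Bad (lastState t steps) a) :
    M.safeVal Bad t ≤ M.prSafe τ t Bad := by
  by_cases ht : t ∈ Bad
  · rw [M.safeVal_bad Bad ht]; exact zero_le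
  · refine le_iInf fun n => ?_
    rw [M.safeN_eq Bad τ t n, if_neg ht]
    calc M.safeVal Bad t = extS (M.pBad Bad) τ t (M.safeVal Bad) [] n :=
        (M.extS_val Bad hτ hO n [] trivial).symm
      _ ≤ extS (M.pBad Bad) τ t (fun _ => 1) [] n :=
        extS_mono _ τ t (fun s => M.safeVal_le_one Bad s) n []

lemma prSafe_le_safeVal {τ : Strat S A} (hτ : M.IsStrategy τ) (t : S) :
    M.prSafe τ t Bad ≤ M.safeVal Bad t :=
  le_iSup₂ (f := fun (σ : Strat S A) (_ : M.IsStrategy σ) => M.prSafe σ t Bad) τ hτ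

lemma prSafe_congr {σ₁ σ₂ : Strat S A} {t : S}
    (H : ∀ steps, M.IsPathFrom t steps → ∀ a, σ₁ t steps a = σ₂ t steps a) :
    M.prSafe σ₁ t Bad = M.prSafe σ₂ t Bad := by
  unfold MDP.prSafe MDP.safeN
  refine iInf_congr fun n => tsum_congr fun ρ => ?_
  obtain ⟨ρ, hp, hst, -, -⟩ := ρ
  unfold MDP.cylProb cylProbP
  rw [if_pos hst, if_pos hst]
  obtain ⟨st, steps⟩ := ρ
  simp only at hst
  subst hst
  exact M.wtP_congr _ H steps [] hp

/-- A default legal action. -/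
noncomputable def dfltA (M : MDP S A) (s : S) : A := (M.exists_legal s).choose

lemma dfltA_legal (s : S) : M.legal s (M.dfltA s) := (M.exists_legal s).choose_spec

/-- The strategy agreeing with the shift of `σ` on paths from `t`, and playing a default
legal action elsewhere. -/
noncomputable def patch (M : MDP S A) (σ : Strat S A) (s₀ t : S) (pre : List (A × S)) :
    Strat S A :=
  fun s steps a => if M.IsPathFrom s steps ∧ s = t then σ s₀ (pre ++ steps) a
    else if a = M.dfltA (lastState s steps) then 1 else 0

lemma patch_isStrategy {σ : Strat S A} (hσ : M.IsStrategy σ) {s₀ : S}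
    {pre : List (A × S)} (hpre : M.IsPathFrom s₀ pre) :
    M.IsStrategy (M.patch σ s₀ (lastState s₀ pre) pre) := by
  intro s steps h
  by_cases hc : M.IsPathFrom s steps ∧ s = lastState s₀ pre
  · obtain ⟨h1, rfl⟩ := hc
    have hpath : M.IsPathFrom s₀ (pre ++ steps) := (M.isPathFrom_append).2 ⟨hpre, h1⟩
    obtain ⟨hsum, hleg⟩ := hσ s₀ (pre ++ steps) hpath
    constructor
    · rw [Finset.sum_congr rfl fun a _ => show M.patch σ s₀ _ pre _ steps a
        = σ s₀ (pre ++ steps) a from if_pos ⟨h1, rfl⟩]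
      exact hsum
    · intro a ha
      rw [show M.patch σ s₀ _ pre _ steps a = σ s₀ (pre ++ steps) a
        from if_pos ⟨h1, rfl⟩] at ha
      have := hleg a ha
      rwa [lastState_append] at this
  · constructor
    · rw [Finset.sum_congr rfl fun a _ => show M.patch σ s₀ _ pre s steps a
        = if a = M.dfltA (lastState s steps) then 1 else 0 from if_neg hc]
      simp
    · intro a ha
      rw [show M.patch σ s₀ _ pre s steps a
        = if a = M.dfltA (lastState s steps) then 1 else 0 from if_neg hc] at ha
      by_cases hd : a = M.dfltA (lastState s steps)
      · rw [hd]; exact M.dfltA_legal _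
      · rw [if_neg hd] at ha; exact absurd rfl (ne_of_gt ha)

lemma prSafe_shift_eq_safeVal {σ : Strat S A} (hσ : M.IsStrategy σ)
    {s₀ : S} (hopt : M.SigmaOptS Bad σ) {pre : List (A × S)}
    (hpre : M.IsPathFrom s₀ pre) :
    M.prSafe (shiftStrat σ s₀ pre) (lastState s₀ pre) Bad
      = M.safeVal Bad (lastState s₀ pre) := by
  have hag : ∀ steps, M.IsPathFrom (lastState s₀ pre) steps → ∀ a,
      shiftStrat σ s₀ pre (lastState s₀ pre) steps a
        = M.patch σ s₀ (lastState s₀ pre) pre (lastState s₀ pre) steps a := by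
    intro steps hs a
    rw [shiftStrat, MDP.patch, if_pos ⟨hs, rfl⟩]
  rw [M.prSafe_congr Bad hag]
  refine le_antisymm (M.prSafe_le_safeVal Bad (M.patch_isStrategy hσ hpre) _)
    (M.safeVal_le_prSafe Bad (M.patch_isStrategy hσ hpre) ?_)
  intro steps hs a ha
  rw [MDP.patch, if_pos ⟨hs, rfl⟩] at ha
  have hpath : M.IsPathFrom s₀ (pre ++ steps) := (M.isPathFrom_append).2 ⟨hpre, hs⟩
  have := hopt s₀ (pre ++ steps) hpath a ha
  rwa [lastState_append] at this

lemma pruned_pos {v : S → ℝ≥0∞} {opt : S → A → Prop} {s : S} {l : List (A × S)}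
    (h : M.IsPathFromPruned v opt s l) : 0 < v s := by
  cases l with
  | nil => exact h
  | cons x xs => exact h.1

lemma pruned_isPathFrom {v : S → ℝ≥0∞} {opt : S → A → Prop}
    (hopt : ∀ s a, opt s a → M.legal s a) :
    ∀ {l : List (A × S)} {s : S}, M.IsPathFromPruned v opt s l → M.IsPathFrom s l := by
  intro l
  induction l with
  | nil => intro s _; trivial
  | cons x xs ih =>
    intro s h
    obtain ⟨a, s'⟩ := x
    obtain ⟨-, ho, hp, hrest⟩ := h
    exact ⟨hopt _ _ ho, hp, ih hrest⟩

lemma toPruned {σ : Strat S A} {s₀ : S} (hopt : M.SigmaOptS Bad σ) :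
    ∀ (l pre : List (A × S)), M.IsPathFrom s₀ pre →
      wtP M.prob σ s₀ pre l ≠ 0 → 0 < M.safeVal Bad (lastState s₀ (pre ++ l)) →
      M.IsPathFromPruned (M.safeVal Bad) (M.OptS Bad) (lastState s₀ pre) l := by
  intro l
  induction l with
  | nil =>
    intro pre _ _ hv
    rw [List.append_nil] at hv
    exact hv
  | cons x xs ih =>
    intro pre hpre hw hv
    obtain ⟨a, s'⟩ := x
    rw [wtP_cons] at hw
    simp only [ne_eq, mul_eq_zero, not_or] at hw
    obtain ⟨⟨hσa, hprob⟩, hw⟩ := hw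
    have hO : M.OptS Bad (lastState s₀ pre) a :=
      hopt s₀ pre hpre a (lt_of_le_of_ne (zero_le) (Ne.symm hσa))
    have hpath' : M.IsPathFrom s₀ (pre ++ [(a, s')]) :=
      (M.isPathFrom_append).2 ⟨hpre, hO.1, lt_of_le_of_ne (zero_le) (Ne.symm hprob),
        trivial⟩
    have hv' : 0 < M.safeVal Bad (lastState s₀ ((pre ++ [(a, s')]) ++ xs)) := by
      simpa using hv
    have hrest := ih (pre ++ [(a, s')]) hpath' hw hv'
    rw [lastState_append, lastState_single] at hrest
    have hvs' : 0 < M.safeVal Bad s' := M.pruned_pos hrest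
    have hvL : 0 < M.safeVal Bad (lastState s₀ pre) := by
      rw [hO.2]
      calc (0 : ℝ≥0∞) < M.prob (lastState s₀ pre) a s' * M.safeVal Bad s' :=
          ENNReal.mul_pos hprob (ne_of_gt hvs')
        _ ≤ ∑ s'' : S, M.prob (lastState s₀ pre) a s'' * M.safeVal Bad s'' :=
          Finset.single_le_sum
            (f := fun s'' => M.prob (lastState s₀ pre) a s'' * M.safeVal Bad s'')
            (fun i _ => zero_le) (Finset.mem_univ s')
    exact ⟨hvL, hO, lt_of_le_of_ne (zero_le) (Ne.symm hprob), hrest⟩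

lemma telescope (σ : Strat S A) (s₀ : S) :
    ∀ (l pre : List (A × S)),
      M.IsPathFromPruned (M.safeVal Bad) (M.OptS Bad) (lastState s₀ pre) l →
      M.safeVal Bad (lastState s₀ pre) * wtP (M.probS' Bad) σ s₀ pre l
        = wtP M.prob σ s₀ pre l * M.safeVal Bad (lastState s₀ (pre ++ l)) := by
  intro l
  induction l with
  | nil =>
    intro pre _
    rw [wtP_nil, wtP_nil, List.append_nil, mul_one, one_mul]
  | cons x xs ih =>
    intro pre h
    obtain ⟨a, s'⟩ := x
    obtain ⟨hv, hO, hp, hrest⟩ := h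
    have hrest' : M.IsPathFromPruned (M.safeVal Bad) (M.OptS Bad)
        (lastState s₀ (pre ++ [(a, s')])) xs := by
      rw [lastState_append, lastState_single]; exact hrest
    have hIH := ih (pre ++ [(a, s')]) hrest'
    rw [wtP_cons, wtP_cons]
    have hprobS' : M.probS' Bad (lastState s₀ pre) a s'
        = M.prob (lastState s₀ pre) a s' * M.safeVal Bad s' / M.safeVal Bad (lastState s₀ pre) := by
      rw [MDP.probS', if_pos ⟨hO, hv⟩]
    rw [hprobS']
    set c := M.safeVal Bad (lastState s₀ pre) with hc
    set xσ := σ s₀ pre a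
    set y := M.prob (lastState s₀ pre) a s'
    set w := wtP (M.probS' Bad) σ s₀ (pre ++ [(a, s')]) xs
    set w' := wtP M.prob σ s₀ (pre ++ [(a, s')]) xs
    have hcan : y * M.safeVal Bad s' / c * c = y * M.safeVal Bad s' :=
      ENNReal.div_mul_cancel (ne_of_gt hv) (M.safeVal_ne_top Bad _)
    have hs' : lastState s₀ (pre ++ [(a, s')]) = s' := by
      rw [lastState_append, lastState_single]
    have happ : pre ++ (a, s') :: xs = (pre ++ [(a, s')]) ++ xs := by simp
    have hIH' : M.safeVal Bad s' * w = w' * M.safeVal Bad (lastState s₀ (pre ++ (a, s') :: xs)) := by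
      rw [happ]
      conv_lhs => rw [← hs']
      exact hIH
    calc c * (xσ * (y * M.safeVal Bad s' / c) * w)
        = (y * M.safeVal Bad s' / c * c) * (xσ * w) := by ring
      _ = xσ * y * (M.safeVal Bad s' * w) := by rw [hcan]; ring
      _ = xσ * y * (w' * M.safeVal Bad (lastState s₀ (pre ++ (a, s') :: xs))) := by rw [hIH']
      _ = xσ * y * w' * M.safeVal Bad (lastState s₀ (pre ++ (a, s') :: xs)) := by ring

end Stmt18Aux
end MDP

/-- for every `s₀ ∈ S'` and every `σ ∈ Σ^Opt`,
`E'_{σ,s₀}(MP) = E_{σ,s₀}(MP | □¬Bad)`. -/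
theorem stmt18 {S : Type u} {A : Type v} [Fintype S] [Fintype A] [Nonempty S] [Nonempty A]
    (M : MDP S A) (Bad : Set S) (hBad : M.SinkSet Bad) (R : S → A → ℝ)
    (s₀ : S) (hs₀ : 0 < M.safeVal Bad s₀)
    (σ : Strat S A) (hσ : M.IsStrategy σ) (hopt : M.SigmaOptS Bad σ) :
    M.mp' Bad R σ s₀ = M.condMP Bad R σ s₀ := by
  classical
  set V := M.safeVal Bad s₀ with hVdef
  have hVt : V ≠ ⊤ := M.safeVal_ne_top Bad s₀
  have hVr : V.toReal ≠ 0 := ENNReal.toReal_ne_zero.2 ⟨hs₀.ne', hVt⟩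
  have hpr : M.prSafe σ s₀ Bad = V := by
    have h0 : M.prSafe σ s₀ Bad = M.prSafe (shiftStrat σ s₀ []) s₀ Bad :=
      M.prSafe_congr Bad (fun steps h a => rfl)
    have h1 := M.prSafe_shift_eq_safeVal Bad hσ (s₀ := s₀) hopt (pre := ([] : List (A × S))) trivial
    exact h0.trans h1
  -- termwise: goodCyl = cylProb * Val(last)
  have hgc : ∀ ρ : FPath S A, M.IsPath ρ → ρ.start = s₀ →
      M.goodCyl σ s₀ Bad ρ = M.cylProb σ s₀ ρ * M.safeVal Bad (lastState s₀ ρ.steps) := by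
    intro ρ hp hst
    unfold MDP.goodCyl FPath.last
    rw [hst]
    rw [M.prSafe_shift_eq_safeVal Bad hσ hopt (pre := ρ.steps)
      (show M.IsPathFrom s₀ ρ.steps from hst ▸ hp)]
  -- termwise telescoping for pruned paths
  have htele : ∀ ρ : FPath S A, ρ.start = s₀ → M.IsPathS' Bad ρ →
      V * M.cylProbS' Bad σ s₀ ρ
        = M.cylProb σ s₀ ρ * M.safeVal Bad (lastState s₀ ρ.steps) := by
    intro ρ hst hps
    unfold MDP.cylProbS' MDP.cylProb cylProbP
    rw [if_pos hst, if_pos hst]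
    obtain ⟨st, steps⟩ := ρ
    unfold MDP.IsPathS' at hps
    simp only at hst hps ⊢
    subst hst
    exact M.telescope Bad σ st steps [] hps
  have key : ∀ n : ℕ, M.condExpRewN Bad R σ s₀ n = M.expRewN' Bad R σ s₀ n := by
    intro n
    unfold MDP.condExpRewN MDP.expRewN'
    have hinc : ∀ ρ : {ρ : FPath S A // M.IsPathS' Bad ρ ∧ ρ.start = s₀ ∧ ρ.length = n},
        M.IsPath ρ.1 ∧ ρ.1.start = s₀ ∧ ρ.1.length = n := by
      rintro ⟨ρ, hps, hst, hlen⟩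
      exact ⟨M.pruned_isPathFrom (fun s a h => h.1) hps, hst, hlen⟩
    have hterm : ∀ ρ : FPath S A, M.IsPath ρ → ρ.start = s₀ → M.IsPathS' Bad ρ →
        (M.goodCyl σ s₀ Bad ρ).toReal
          = V.toReal * (M.cylProbS' Bad σ s₀ ρ).toReal := by
      intro ρ hp hst hps
      rw [hgc ρ hp hst, ← htele ρ hst hps, ENNReal.toReal_mul]
    have hnum : (∑' ρ : {ρ : FPath S A // M.IsPath ρ ∧ ρ.start = s₀ ∧ ρ.length = n},
        (M.goodCyl σ s₀ Bad ρ.1).toReal * rewardOf R ρ.1.start ρ.1.steps)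
        = ∑' ρ : {ρ : FPath S A // M.IsPathS' Bad ρ ∧ ρ.start = s₀ ∧ ρ.length = n},
          V.toReal * ((M.cylProbS' Bad σ s₀ ρ.1).toReal
            * rewardOf R ρ.1.start ρ.1.steps) := by
      refine tsum_eq_tsum_of_ne_zero_bij
        (f := fun ρ : {ρ : FPath S A // M.IsPath ρ ∧ ρ.start = s₀ ∧ ρ.length = n} =>
          (M.goodCyl σ s₀ Bad ρ.1).toReal * rewardOf R ρ.1.start ρ.1.steps)
        (g := fun ρ : {ρ : FPath S A // M.IsPathS' Bad ρ ∧ ρ.start = s₀ ∧ ρ.length = n} =>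
          V.toReal * ((M.cylProbS' Bad σ s₀ ρ.1).toReal
            * rewardOf R ρ.1.start ρ.1.steps))
        (fun x => ⟨x.1.1, hinc x.1⟩) ?_ ?_ ?_
      · rintro ⟨⟨ρ₁, h₁⟩, hx₁⟩ ⟨⟨ρ₂, h₂⟩, hx₂⟩ h
        simp only [Subtype.mk.injEq] at h ⊢
        exact h
      · rintro ⟨ρ, hp, hst, hlen⟩ hne
        simp only [Function.mem_support, ne_eq, mul_eq_zero, not_or] at hne
        obtain ⟨hgc0, hrw0⟩ := hne
        have hgc0' : M.goodCyl σ s₀ Bad ρ ≠ 0 := fun h => hgc0 (by rw [h]; simp)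
        rw [hgc ρ hp hst] at hgc0'
        have hcyl0 : M.cylProb σ s₀ ρ ≠ 0 := fun h => hgc0' (by rw [h, zero_mul])
        have hval0 : M.safeVal Bad (lastState s₀ ρ.steps) ≠ 0 :=
          fun h => hgc0' (by rw [h, mul_zero])
        have hwt : wtP M.prob σ s₀ [] ρ.steps ≠ 0 := by
          unfold MDP.cylProb cylProbP at hcyl0
          rw [if_pos hst, hst] at hcyl0
          exact hcyl0
        have hps : M.IsPathS' Bad ρ := by
          unfold MDP.IsPathS'
          rw [hst]
          exact M.toPruned Bad hopt ρ.steps [] trivial hwt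
            (lt_of_le_of_ne (zero_le) (Ne.symm hval0))
        have hfg0 : V.toReal * ((M.cylProbS' Bad σ s₀ ρ).toReal
            * rewardOf R ρ.start ρ.steps) ≠ 0 := by
          rw [← mul_assoc, ← hterm ρ hp hst hps]
          simp only [ne_eq, mul_eq_zero, not_or]
          exact ⟨hgc0, hrw0⟩
        exact ⟨⟨⟨ρ, hps, hst, hlen⟩, hfg0⟩, rfl⟩
      · rintro ⟨⟨ρ, hps, hst, hlen⟩, hx⟩
        have hp : M.IsPath ρ := M.pruned_isPathFrom (fun s a h => h.1) hps
        simp only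
        rw [hterm ρ hp hst hps, mul_assoc]
    rw [hnum, tsum_mul_left, hpr]
    exact mul_div_cancel_left₀ _ hVr
  unfold MDP.mp' MDP.condMP
  congr 1
  funext n
  rw [key n]
end
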